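/- Let Π be a program with an epistemic splitting set U ⊆ At and a splitting ⟨B_U(Π),T_U(Π)⟩. Then a total belief view W is a FEEL-world view of Π if and only if W is a FEEL-world view of B_U(Π) ∪ E_U(Π,W). -/

import Mathlib

namespace Epist

attribute [local instance] Classical.propDecidable

/-- Epistemic formulas over a set (type) of atoms `α`. -/
inductive EForm (α : Type) : Type where
  | bot : EForm α
  | atom : α → EForm α
  | and : EForm α → EForm α → EForm α
  | or : EForm α → EForm α → EForm α
  | imp : EForm α → EForm α → EForm α
  | K : EForm α → EForm α

variable {α : Type}

/-- ¬φ abbreviates φ → ⊥. -/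
def EForm.neg (φ : EForm α) : EForm α := .imp φ .bot

/-- ⊤ abbreviates ¬⊥. -/
def EForm.top : EForm α := EForm.neg .bot

/-- Atoms occurring in a formula. -/
def EForm.atoms : EForm α → Set α
  | .bot => ∅
  | .atom a => {a}
  | .and φ ψ => φ.atoms ∪ ψ.atoms
  | .or φ ψ => φ.atoms ∪ ψ.atoms
  | .imp φ ψ => φ.atoms ∪ ψ.atoms
  | .K φ => φ.atoms

/-- A belief view: a set of HT-interpretations ⟨H,T⟩ (as pairs of sets of atoms). -/
abbrev BView (α : Type) := Set (Set α × Set α)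

/-- W^t : the total belief view {⟨T,T⟩ : ⟨H,T⟩ ∈ W}. -/
def tview (W : BView α) : BView α := (fun i => (i.2, i.2)) '' W

/-- Wellformedness of a belief view: nonempty and H ⊆ T for all members. -/
def isBView (W : BView α) : Prop := W.Nonempty ∧ ∀ i ∈ W, i.1 ⊆ i.2

/-- A belief view is total when all its HT-interpretations are total. -/
def totalView (W : BView α) : Prop := ∀ i ∈ W, i.1 = i.2

/-- Satisfaction of an epistemic formula by a belief interpretation ⟨W,H,T⟩. -/
def sat : EForm α → BView α → Set α → Set α → Prop
  | .bot, _, _, _ => False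
  | .atom a, _, H, _ => a ∈ H
  | .and φ ψ, W, H, T => sat φ W H T ∧ sat ψ W H T
  | .or φ ψ, W, H, T => sat φ W H T ∨ sat ψ W H T
  | .imp φ ψ, W, H, T =>
      (sat φ W H T → sat ψ W H T) ∧ (sat φ (tview W) T T → sat ψ (tview W) T T)
  | .K φ, W, _, _ => ∀ i ∈ W, sat φ W i.1 i.2

/-- ⟨W,H',T'⟩ ⊨ φ for all ⟨H',T'⟩ ∈ W. -/
def epSat (W : BView α) (φ : EForm α) : Prop := ∀ i ∈ W, sat φ W i.1 i.2

/-- W is an epistemic model of the theory Γ. -/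
def epModel (W : BView α) (Γ : Set (EForm α)) : Prop :=
  isBView W ∧ ∀ φ ∈ Γ, epSat W φ

/-- ⟨W,H,T⟩ is a belief model of the theory Γ. -/
def beliefModel (W : BView α) (H T : Set α) (Γ : Set (EForm α)) : Prop :=
  isBView W ∧ H ⊆ T ∧ (∀ φ ∈ Γ, sat φ W H T) ∧ ∀ φ ∈ Γ, epSat W φ

/-- Order ⪯ on belief interpretations: ⟨W',H',T'⟩ ⪯ ⟨W,H,T⟩. -/
def biLE (W' : BView α) (H' T' : Set α) (W : BView α) (H T : Set α) : Prop :=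
  (T' = T ∧ H' ⊆ H) ∧
  (∀ i ∈ W, ∃ H₁, (H₁, i.2) ∈ W' ∧ H₁ ⊆ i.1) ∧
  (∀ i ∈ W', ∃ H₁, (H₁, i.2) ∈ W ∧ i.1 ⊆ H₁)

/-- Strict order ≺ on belief interpretations. -/
def biLT (W' : BView α) (H' T' : Set α) (W : BView α) (H T : Set α) : Prop :=
  biLE W' H' T' W H T ∧ (W', H', T') ≠ (W, H, T)

/-- Order ⪯ on belief views. -/
def viewLE (W₁ W₂ : BView α) : Prop :=
  (∀ i ∈ W₂, ∃ H₁, (H₁, i.2) ∈ W₁ ∧ H₁ ⊆ i.1) ∧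
  (∀ i ∈ W₁, ∃ H₂, (H₂, i.2) ∈ W₂ ∧ i.1 ⊆ H₂)

/-- Strict order ≺ on belief views. -/
def viewLT (W₁ W₂ : BView α) : Prop := viewLE W₁ W₂ ∧ W₁ ≠ W₂

/-- ⟨W,T⟩ is an equilibrium belief model of Γ. -/
def eqBeliefModel (Γ : Set (EForm α)) (W : BView α) (T : Set α) : Prop :=
  totalView W ∧ beliefModel W T T Γ ∧
  ∀ W' H' T', beliefModel W' H' T' Γ → ¬ biLT W' H' T' W T T

/-- ⟨W,T⟩ is a weak equilibrium belief model of Γ: no belief-total (i.e. with total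
view) belief model of Γ is ≺-smaller. -/
def weakEqBeliefModel (Γ : Set (EForm α)) (W : BView α) (T : Set α) : Prop :=
  totalView W ∧ beliefModel W T T Γ ∧
  ∀ W' H' T', totalView W' → beliefModel W' H' T' Γ → ¬ biLT W' H' T' W T T

/-- Identification of a set of propositional interpretations with a total belief view. -/
def ofSets (S : Set (Set α)) : BView α := (fun T => (T, T)) '' S

/-- W is a FAEEL-world view of Γ iff W = { T : ⟨W,T⟩ is an equilibrium belief model }. -/
def FAEEL (Γ : Set (EForm α)) (W : BView α) : Prop :=
  isBView W ∧ totalView W ∧ W = ofSets {T | eqBeliefModel Γ W T}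

/-- W is a weak autoepistemic world view of Γ. -/
def weakAEWorldView (Γ : Set (EForm α)) (W : BView α) : Prop :=
  isBView W ∧ totalView W ∧ W = ofSets {T | weakEqBeliefModel Γ W T}

/-- W is a FEEL-world view of Γ. -/
def FEEL (Γ : Set (EForm α)) (W : BView α) : Prop :=
  totalView W ∧ epModel W Γ ∧ ∀ W', epModel W' Γ → ¬ viewLT W' W

/-- A belief view is simple iff ⟨H,T⟩,⟨H',T⟩ ∈ W imply H = H'. -/
def simpleView (W : BView α) : Prop := ∀ i ∈ W, ∀ j ∈ W, i.2 = j.2 → i.1 = j.1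

/-- W is an EEL-world view of Γ. -/
def EEL (Γ : Set (EForm α)) (W : BView α) : Prop :=
  totalView W ∧ epModel W Γ ∧
  ¬ ∃ W', simpleView W' ∧ epModel W' Γ ∧ tview W' = W ∧ ∃ i ∈ W', i.1 ⊂ i.2

/-- Ordinary here-and-there satisfaction (for objective, i.e. K-free, formulas). -/
def htSat (φ : EForm α) (H T : Set α) : Prop := sat φ (∅ : BView α) H T

/-- T is a stable model of the (objective) theory Δ. -/
def stableModel (Δ : Set (EForm α)) (T : Set α) : Prop :=
  (∀ φ ∈ Δ, htSat φ T T) ∧ ∀ H, H ⊂ T → ¬ ∀ φ ∈ Δ, htSat φ H T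

/-- SM[Δ] : the set of stable models of Δ. -/
def SMset (Δ : Set (EForm α)) : Set (Set α) := {T | stableModel Δ T}

/-- Subjective reduct of a formula w.r.t. a belief view W and a signature U:
each maximal subformula Kφ with Atoms(φ) ⊆ U is replaced by ⊤ if W ⊨ Kφ
and by ⊥ otherwise. -/
noncomputable def reduct (W : BView α) (U : Set α) : EForm α → EForm α
  | .bot => .bot
  | .atom a => .atom a
  | .and φ ψ => .and (reduct W U φ) (reduct W U ψ)
  | .or φ ψ => .or (reduct W U φ) (reduct W U ψ)
  | .imp φ ψ => .imp (reduct W U φ) (reduct W U ψ)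
  | .K φ =>
      if φ.atoms ⊆ U then (if epSat W (.K φ) then EForm.top else .bot)
      else .K (reduct W U φ)

/-- W is a G91-world view of Γ iff W = SM[Γ^W]. -/
def G91 (Γ : Set (EForm α)) (W : BView α) : Prop :=
  isBView W ∧ totalView W ∧ W = ofSets (SMset (reduct W Set.univ '' Γ))

/-- Negatively subjective reduct: each maximal subformula ¬Kφ is replaced
by ⊤ if W ⊭ Kφ and by ⊥ otherwise. -/
noncomputable def negReduct (W : BView α) : EForm α → EForm α
  | .bot => .bot
  | .atom a => .atom a
  | .and φ ψ => .and (negReduct W φ) (negReduct W ψ)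
  | .or φ ψ => .or (negReduct W φ) (negReduct W ψ)
  | .imp (.K φ) .bot => if epSat W (.K φ) then .bot else EForm.top
  | .imp φ ψ => .imp (negReduct W φ) (negReduct W ψ)
  | .K φ => .K (negReduct W φ)

/-- Atom, ⊤ or ⊥. -/
def isAtomBase (φ : EForm α) : Prop := (∃ a, φ = .atom a) ∨ φ = EForm.top ∨ φ = .bot

/-- Objective literals: l, ¬l or ¬¬l for l an atom, ⊤ or ⊥. -/
def isObjLit (φ : EForm α) : Prop :=
  isAtomBase φ ∨ (∃ ψ, isAtomBase ψ ∧ φ = EForm.neg ψ) ∨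
    (∃ ψ, isAtomBase ψ ∧ φ = EForm.neg (EForm.neg ψ))

/-- Subjective literals: Kl, ¬Kl or ¬¬Kl for l an objective literal. -/
def isSubjLit (φ : EForm α) : Prop :=
  (∃ l, isObjLit l ∧ φ = .K l) ∨ (∃ l, isObjLit l ∧ φ = EForm.neg (.K l)) ∨
    (∃ l, isObjLit l ∧ φ = EForm.neg (EForm.neg (.K l)))

/-- Positive subjective literals: Kl. -/
def isPosSubjLit (φ : EForm α) : Prop := ∃ l, isObjLit l ∧ φ = .K l

/-- A rule: a head disjunction of atoms and a body list of literals. -/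
structure ERule (α : Type) where
  head : List α
  body : List (EForm α)

/-- Wellformedness of a rule: every body member is an (objective or subjective) literal. -/
def ERule.wf (r : ERule α) : Prop := ∀ φ ∈ r.body, isObjLit φ ∨ isSubjLit φ

/-- Disjunction of atoms (⊥ when empty). -/
def disjForm : List α → EForm α
  | [] => .bot
  | a :: l => .or (.atom a) (disjForm l)

/-- Conjunction of formulas (⊤ when empty). -/
def conjForm : List (EForm α) → EForm α
  | [] => EForm.top
  | φ :: l => .and φ (conjForm l)

/-- The formula Head(r) ← Body(r) corresponding to a rule. -/
def ERule.form (r : ERule α) : EForm α := .imp (conjForm r.body) (disjForm r.head)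

/-- Atoms of Head(r). -/
def ERule.headAtoms (r : ERule α) : Set α := {a | a ∈ r.head}

/-- Atoms of Body_obj(r). -/
def ERule.objBodyAtoms (r : ERule α) : Set α := {a | ∃ φ ∈ r.body, isObjLit φ ∧ a ∈ φ.atoms}

/-- Atoms of Body_sub(r). -/
def ERule.subjBodyAtoms (r : ERule α) : Set α := {a | ∃ φ ∈ r.body, isSubjLit φ ∧ a ∈ φ.atoms}

/-- Atoms of Body⁺_sub(r). -/
def ERule.posSubjBodyAtoms (r : ERule α) : Set α :=
  {a | ∃ φ ∈ r.body, isPosSubjLit φ ∧ a ∈ φ.atoms}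

/-- Atoms(r). -/
def ERule.atoms (r : ERule α) : Set α := r.headAtoms ∪ {a | ∃ φ ∈ r.body, a ∈ φ.atoms}

/-- A rule is objective if all its body literals are objective. -/
def ERule.objective (r : ERule α) : Prop := ∀ φ ∈ r.body, isObjLit φ

/-- A program is a set of rules. -/
abbrev EProgram (α : Type) := Set (ERule α)

def progWF (P : EProgram α) : Prop := ∀ r ∈ P, r.wf

/-- The theory consisting of the formulas of the rules of a program. -/
def progTheory (P : EProgram α) : Set (EForm α) := ERule.form '' P

def progAtoms (P : EProgram α) : Set α := {a | ∃ r ∈ P, a ∈ r.atoms}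

def progObjective (P : EProgram α) : Prop := ∀ r ∈ P, r.objective

/-- U is an epistemic splitting set of P. -/
def splittingSet (P : EProgram α) (U : Set α) : Prop :=
  ∀ r ∈ P, r.atoms ⊆ U ∨ (r.objBodyAtoms ∪ r.headAtoms) ∩ U = ∅

/-- ⟨B,Tp⟩ is a splitting of P w.r.t. U. -/
def isSplitting (P : EProgram α) (U : Set α) (B Tp : EProgram α) : Prop :=
  B ∩ Tp = ∅ ∧ B ∪ Tp = P ∧ (∀ r ∈ B, r.atoms ⊆ U) ∧
    ∀ r ∈ Tp, (r.objBodyAtoms ∪ r.headAtoms) ∩ U = ∅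

/-- Subjective reduct of a rule. -/
noncomputable def ruleReduct (W : BView α) (U : Set α) (r : ERule α) : ERule α :=
  ⟨r.head, r.body.map (reduct W U)⟩

/-- E_U(Π,W) := (T_U(Π))^W_U, here taking the top part Tp as argument. -/
noncomputable def EU (Tp : EProgram α) (W : BView α) (U : Set α) : EProgram α :=
  ruleReduct W U '' Tp

/-- W_b ⊔ W_t (for total belief views: pointwise unions). -/
def vjoin (W₁ W₂ : BView α) : BView α :=
  {i | ∃ j ∈ W₁, ∃ k ∈ W₂, i = (j.1 ∪ k.1, j.2 ∪ k.2)}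

/-- W|_U (for total belief views: pointwise intersection with U). -/
def vrestrict (W : BView α) (U : Set α) : BView α :=
  {i | ∃ j ∈ W, i = (j.1 ∩ U, j.2 ∩ U)}

/-- Epistemic dependence dep(a,b). -/
def dep (P : EProgram α) (a b : α) : Prop :=
  ∃ r ∈ P, a ∈ r.headAtoms ∪ r.objBodyAtoms ∧ b ∈ r.subjBodyAtoms

/-- Positive epistemic dependence dep⁺(a,b). -/
def depPos (P : EProgram α) (a b : α) : Prop :=
  ∃ r ∈ P, a ∈ r.headAtoms ∪ r.objBodyAtoms ∧ b ∈ r.posSubjBodyAtoms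

/-- P is epistemically stratified. -/
def stratified (P : EProgram α) : Prop :=
  ∃ lam : α → ℕ,
    (∀ r ∈ P, ∀ a ∈ r.atoms \ r.subjBodyAtoms, ∀ b ∈ r.atoms \ r.subjBodyAtoms,
      lam a = lam b) ∧
    ∀ a b, dep P a b → lam a > lam b

/-- P is epistemically tight. -/
def tight (P : EProgram α) : Prop :=
  ∃ lam : α → ℕ,
    (∀ r ∈ P, ∀ a ∈ r.atoms \ r.subjBodyAtoms, ∀ b ∈ r.atoms \ r.subjBodyAtoms,
      lam a = lam b) ∧
    ∀ a b, depPos P a b → lam a > lam b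

/-- A semantics S satisfies the epistemic splitting property. -/
def satisfiesSplitting (S : EProgram α → BView α → Prop) : Prop :=
  ∀ P : EProgram α, progWF P → ∀ U : Set α, splittingSet P U →
    ∀ B Tp : EProgram α, isSplitting P U B Tp →
      ∀ W : BView α,
        S P W ↔ ∃ Wb Wt, S B Wb ∧ S (EU Tp Wb U) Wt ∧ W = vjoin Wb Wt

/-- A semantics S satisfies supra-ASP. -/
def supraASP (S : EProgram α → BView α → Prop) : Prop :=
  ∀ P : EProgram α, progWF P → progObjective P →
    (SMset (progTheory P) ≠ ∅ ∧ ∀ W, (S P W ↔ W = ofSets (SMset (progTheory P)))) ∨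
    (SMset (progTheory P) = ∅ ∧ ∀ W, ¬ S P W)

end Epist

namespace Epist

section Aux

attribute [local instance] Classical.propDecidable

variable {α : Type}

/-- K-free formulas. -/
def KFree : EForm α → Prop
  | .bot => True
  | .atom _ => True
  | .and φ ψ => KFree φ ∧ KFree ψ
  | .or φ ψ => KFree φ ∧ KFree ψ
  | .imp φ ψ => KFree φ ∧ KFree ψ
  | .K _ => False

lemma satK_unfold (φ : EForm α) (W : BView α) (H T : Set α) :
    sat (.K φ) W H T = ∀ i ∈ W, sat φ W i.1 i.2 := rfl

lemma sat_imp_iff (φ ψ : EForm α) (W : BView α) (H T : Set α) :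
    sat (.imp φ ψ) W H T ↔
      ((sat φ W H T → sat ψ W H T) ∧ (sat φ (tview W) T T → sat ψ (tview W) T T)) := Iff.rfl

lemma sat_bot_iff (W : BView α) (H T : Set α) : sat (.bot : EForm α) W H T ↔ False := Iff.rfl

lemma sat_top (W : BView α) (H T : Set α) : sat (EForm.top : EForm α) W H T := by
  exact ⟨fun f => f, fun f => f⟩

lemma tview_tview (W : BView α) : tview (tview W) = tview W := by
  unfold tview; rw [Set.image_image]

lemma mem_tview {W : BView α} {j : Set α × Set α} :
    j ∈ tview W ↔ ∃ i ∈ W, j = (i.2, i.2) := by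
  constructor
  · rintro ⟨i, hi, rfl⟩; exact ⟨i, hi, rfl⟩
  · rintro ⟨i, hi, rfl⟩; exact ⟨i, hi, rfl⟩

lemma tview_total {W : BView α} (h : totalView W) : tview W = W := by
  ext j; rw [mem_tview]; constructor
  · rintro ⟨⟨A, B⟩, hi, rfl⟩
    have hAB : A = B := h _ hi
    subst hAB; exact hi
  · intro hj
    refine ⟨j, hj, ?_⟩
    have := h j hj
    exact Prod.ext this rfl

lemma tview_eq_of_LE {W W' : BView α} (hW : totalView W) (h : viewLE W' W) :
    tview W' = W := by
  ext j; rw [mem_tview]; constructor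
  · rintro ⟨i, hi, rfl⟩
    obtain ⟨H₂, hm, _⟩ := h.2 i hi
    have hEq : H₂ = i.2 := hW _ hm
    rwa [hEq] at hm
  · intro hj
    obtain ⟨H₁, hm, _⟩ := h.1 j hj
    refine ⟨(H₁, j.2), hm, ?_⟩
    have := hW j hj
    exact Prod.ext this rfl

lemma total_mem_of {W W' : BView α} (hW : totalView W) (h : viewLE W' W)
    {i : Set α × Set α} (hi : i ∈ W') : (i.2, i.2) ∈ W := by
  obtain ⟨H₂, hm, _⟩ := h.2 i hi
  have hEq : H₂ = i.2 := hW _ hm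
  rwa [hEq] at hm

lemma kfree_sat_congr (φ : EForm α) (h : KFree φ) :
    ∀ (W₁ W₂ : BView α) (H₁ H₂ T₁ T₂ : Set α),
      (∀ a ∈ φ.atoms, (a ∈ H₁ ↔ a ∈ H₂)) → (∀ a ∈ φ.atoms, (a ∈ T₁ ↔ a ∈ T₂)) →
      (sat φ W₁ H₁ T₁ ↔ sat φ W₂ H₂ T₂) := by
  induction φ with
  | bot => intros; exact Iff.rfl
  | atom a =>
      intro W₁ W₂ H₁ H₂ T₁ T₂ hH hT
      exact hH a (by simp [EForm.atoms])
  | and φ ψ ihφ ihψ =>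
      intro W₁ W₂ H₁ H₂ T₁ T₂ hH hT
      obtain ⟨h1, h2⟩ := h
      simp only [EForm.atoms, Set.mem_union] at hH hT
      exact and_congr
        (ihφ h1 _ _ _ _ _ _ (fun a ha => hH a (Or.inl ha)) (fun a ha => hT a (Or.inl ha)))
        (ihψ h2 _ _ _ _ _ _ (fun a ha => hH a (Or.inr ha)) (fun a ha => hT a (Or.inr ha)))
  | or φ ψ ihφ ihψ =>
      intro W₁ W₂ H₁ H₂ T₁ T₂ hH hT
      obtain ⟨h1, h2⟩ := h
      simp only [EForm.atoms, Set.mem_union] at hH hT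
      exact or_congr
        (ihφ h1 _ _ _ _ _ _ (fun a ha => hH a (Or.inl ha)) (fun a ha => hT a (Or.inl ha)))
        (ihψ h2 _ _ _ _ _ _ (fun a ha => hH a (Or.inr ha)) (fun a ha => hT a (Or.inr ha)))
  | imp φ ψ ihφ ihψ =>
      intro W₁ W₂ H₁ H₂ T₁ T₂ hH hT
      obtain ⟨h1, h2⟩ := h
      simp only [EForm.atoms, Set.mem_union] at hH hT
      exact and_congr
        (imp_congr
          (ihφ h1 _ _ _ _ _ _ (fun a ha => hH a (Or.inl ha)) (fun a ha => hT a (Or.inl ha)))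
          (ihψ h2 _ _ _ _ _ _ (fun a ha => hH a (Or.inr ha)) (fun a ha => hT a (Or.inr ha))))
        (imp_congr
          (ihφ h1 _ _ _ _ _ _ (fun a ha => hT a (Or.inl ha)) (fun a ha => hT a (Or.inl ha)))
          (ihψ h2 _ _ _ _ _ _ (fun a ha => hT a (Or.inr ha)) (fun a ha => hT a (Or.inr ha))))
  | K φ ih => exact h.elim

lemma reduct_kfree (W : BView α) (U : Set α) (φ : EForm α) (h : KFree φ) :
    reduct W U φ = φ := by
  induction φ with
  | bot => rfl
  | atom a => rfl
  | and φ ψ ihφ ihψ => rw [reduct, ihφ h.1, ihψ h.2]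
  | or φ ψ ihφ ihψ => rw [reduct, ihφ h.1, ihψ h.2]
  | imp φ ψ ihφ ihψ => rw [reduct, ihφ h.1, ihψ h.2]
  | K φ ih => exact h.elim

lemma sat_persist (φ : EForm α) : ∀ (W : BView α) (H T : Set α),
    (∀ i ∈ W, i.1 ⊆ i.2) → H ⊆ T → sat φ W H T → sat φ (tview W) T T := by
  induction φ with
  | bot => intro W H T _ _ h; exact h
  | atom a => intro W H T _ hHT h; exact hHT h
  | and φ ψ ihφ ihψ =>
      intro W H T hw hHT h
      exact ⟨ihφ W H T hw hHT h.1, ihψ W H T hw hHT h.2⟩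
  | or φ ψ ihφ ihψ =>
      intro W H T hw hHT h
      rcases h with h | h
      · exact Or.inl (ihφ W H T hw hHT h)
      · exact Or.inr (ihψ W H T hw hHT h)
  | imp φ ψ ihφ ihψ =>
      intro W H T hw hHT h
      refine ⟨h.2, ?_⟩
      rw [tview_tview]
      exact h.2
  | K φ ih =>
      intro W H T hw _ h
      intro j hj
      rw [mem_tview] at hj
      obtain ⟨i, hi, rfl⟩ := hj
      exact ih W i.1 i.2 hw (hw i hi) (h i hi)

lemma epSat_K_of {W : BView α} {φ : EForm α} (h : ∀ i ∈ W, sat φ W i.1 i.2) :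
    epSat W (.K φ) := fun _ _ => h

lemma epSat_K_elim {W : BView α} {φ : EForm α} (hne : W.Nonempty) (h : epSat W (.K φ)) :
    ∀ i ∈ W, sat φ W i.1 i.2 := by
  obtain ⟨j, hj⟩ := hne; exact h j hj

lemma satK_iff_epSat {W : BView α} (hne : W.Nonempty) (φ : EForm α) :
    ∀ (H T : Set α), sat (.K φ) W H T ↔ epSat W (.K φ) := by
  intro H T
  rw [satK_unfold]
  exact ⟨fun h => epSat_K_of h, fun h => epSat_K_elim hne h⟩

lemma reduct_sat_self (W : BView α) (htW : tview W = W) (U : Set α) (φ : EForm α) :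
    ∀ H T, sat (reduct W U φ) W H T ↔ sat φ W H T := by
  induction φ with
  | bot => intro H T; exact Iff.rfl
  | atom a => intro H T; exact Iff.rfl
  | and φ ψ ihφ ihψ =>
      intro H T
      rw [reduct]
      exact and_congr (ihφ H T) (ihψ H T)
  | or φ ψ ihφ ihψ =>
      intro H T
      rw [reduct]
      exact or_congr (ihφ H T) (ihψ H T)
  | imp φ ψ ihφ ihψ =>
      intro H T
      rw [reduct]
      rw [sat_imp_iff, sat_imp_iff, htW]
      exact and_congr (imp_congr (ihφ H T) (ihψ H T)) (imp_congr (ihφ T T) (ihψ T T))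
  | K φ ih =>
      intro H T
      by_cases hsub : φ.atoms ⊆ U
      · simp only [reduct, hsub, if_true]
        by_cases he : epSat W (.K φ)
        · simp only [he, if_true]
          refine iff_of_true (sat_top _ _ _) ?_
          rw [satK_unfold]
          intro i hi
          exact he i hi i hi
        · simp only [he, if_false]
          rw [sat_bot_iff]
          refine iff_of_false (fun h => h) (fun h => he ?_)
          rw [satK_unfold] at h
          exact fun i hi => h
      · simp only [reduct, hsub, if_false]
        rw [satK_unfold, satK_unfold]
        constructor
        · intro h i hi; exact (ih i.1 i.2).mp (h i hi)
        · intro h i hi; exact (ih i.1 i.2).mpr (h i hi)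

lemma sat_conjForm (W : BView α) (H T : Set α) :
    ∀ L : List (EForm α), sat (conjForm L) W H T ↔ ∀ φ ∈ L, sat φ W H T := by
  intro L
  induction L with
  | nil => simp [conjForm, sat_top W H T]
  | cons φ L ih =>
      simp only [conjForm, List.mem_cons]
      constructor
      · rintro ⟨h1, h2⟩ ψ (rfl | hψ)
        · exact h1
        · exact ih.mp h2 ψ hψ
      · intro h
        exact ⟨h φ (Or.inl rfl), ih.mpr (fun ψ hψ => h ψ (Or.inr hψ))⟩

lemma sat_disjForm (W : BView α) (H T : Set α) :
    ∀ l : List α, sat (disjForm l) W H T ↔ ∃ a ∈ l, a ∈ H := by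
  intro l
  induction l with
  | nil => simp [disjForm, sat_bot_iff]
  | cons a l ih =>
      simp only [disjForm, List.mem_cons]
      constructor
      · rintro (h | h)
        · exact ⟨a, Or.inl rfl, h⟩
        · obtain ⟨b, hb, hbH⟩ := ih.mp h
          exact ⟨b, Or.inr hb, hbH⟩
      · rintro ⟨b, (rfl | hb), hbH⟩
        · exact Or.inl hbH
        · exact Or.inr (ih.mpr ⟨b, hb, hbH⟩)

lemma sat_ruleForm (r : ERule α) (W : BView α) (H T : Set α) :
    sat r.form W H T ↔
      ((∀ φ ∈ r.body, sat φ W H T) → ∃ a ∈ r.head, a ∈ H) ∧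
      ((∀ φ ∈ r.body, sat φ (tview W) T T) → ∃ a ∈ r.head, a ∈ T) := by
  show (_ ∧ _) ↔ _
  rw [sat_conjForm, sat_disjForm, sat_conjForm, sat_disjForm]

lemma reduct_conjForm (W : BView α) (U : Set α) :
    ∀ L : List (EForm α), reduct W U (conjForm L) = conjForm (L.map (reduct W U)) := by
  intro L
  induction L with
  | nil => rfl
  | cons φ L ih => simp only [conjForm, List.map_cons, reduct, ih]

lemma reduct_disjForm (W : BView α) (U : Set α) :
    ∀ l : List α, reduct W U (disjForm l) = disjForm l := by
  intro l
  induction l with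
  | nil => rfl
  | cons a l ih => simp only [disjForm, reduct, ih]

lemma ruleReduct_form (W : BView α) (U : Set α) (r : ERule α) :
    (ruleReduct W U r).form = reduct W U r.form := by
  show EForm.imp _ _ = _
  rw [ERule.form, reduct, reduct_conjForm, reduct_disjForm]
  rfl

lemma atomBase_kfree {φ : EForm α} (h : isAtomBase φ) : KFree φ := by
  rcases h with ⟨a, rfl⟩ | rfl | rfl
  · trivial
  · exact ⟨trivial, trivial⟩
  · trivial

lemma objLit_kfree {φ : EForm α} (h : isObjLit φ) : KFree φ := by
  rcases h with h | ⟨ψ, hψ, rfl⟩ | ⟨ψ, hψ, rfl⟩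
  · exact atomBase_kfree h
  · exact ⟨atomBase_kfree hψ, trivial⟩
  · exact ⟨⟨atomBase_kfree hψ, trivial⟩, trivial⟩

lemma atomBase_atoms_pair {φ : EForm α} (h : isAtomBase φ) :
    ∀ a ∈ φ.atoms, ∀ b ∈ φ.atoms, a = b := by
  rcases h with ⟨c, rfl⟩ | rfl | rfl
  · intro a ha b hb
    simp only [EForm.atoms, Set.mem_singleton_iff] at ha hb
    rw [ha, hb]
  · intro a ha
    simp [EForm.top, EForm.neg, EForm.atoms] at ha
  · intro a ha
    simp [EForm.atoms] at ha

lemma objLit_atoms_pair {φ : EForm α} (h : isObjLit φ) :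
    ∀ a ∈ φ.atoms, ∀ b ∈ φ.atoms, a = b := by
  rcases h with h | ⟨ψ, hψ, rfl⟩ | ⟨ψ, hψ, rfl⟩
  · exact atomBase_atoms_pair h
  · intro a ha b hb
    simp only [EForm.neg, EForm.atoms, Set.union_empty] at ha hb
    exact atomBase_atoms_pair hψ a ha b hb
  · intro a ha b hb
    simp only [EForm.neg, EForm.atoms, Set.union_empty] at ha hb
    exact atomBase_atoms_pair hψ a ha b hb

lemma objLit_notU {φ : EForm α} (h : isObjLit φ) {U : Set α} (hn : ¬ φ.atoms ⊆ U) :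
    ∀ a ∈ φ.atoms, a ∉ U := by
  obtain ⟨a, ha, haU⟩ := Set.not_subset.mp hn
  intro b hb
  rwa [objLit_atoms_pair h b hb a ha]

/-- Restore the U-part of each interpretation to total. -/
def Fmap (U : Set α) (i : Set α × Set α) : Set α × Set α :=
  ((i.1 ∩ U) ∪ (i.2 \ U), i.2)

lemma tview_image_F (U : Set α) (W₁ : BView α) : tview (Fmap U '' W₁) = tview W₁ := by
  unfold tview Fmap
  rw [Set.image_image]

lemma sat_congr_F {U : Set α} (W₁ : BView α) (φ : EForm α) :
    ∀ H T, φ.atoms ⊆ U →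
      (sat φ W₁ H T ↔ sat φ (Fmap U '' W₁) ((H ∩ U) ∪ (T \ U)) T) := by
  induction φ with
  | bot => intro H T _; exact Iff.rfl
  | atom a =>
      intro H T hsub
      have haU : a ∈ U := hsub (by simp [EForm.atoms])
      show a ∈ H ↔ a ∈ (H ∩ U) ∪ (T \ U)
      constructor
      · intro h; exact Or.inl ⟨h, haU⟩
      · rintro (⟨h, _⟩ | ⟨_, h⟩)
        · exact h
        · exact absurd haU h
  | and φ ψ ihφ ihψ =>
      intro H T hsub
      simp only [EForm.atoms, Set.union_subset_iff] at hsub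
      exact and_congr (ihφ H T hsub.1) (ihψ H T hsub.2)
  | or φ ψ ihφ ihψ =>
      intro H T hsub
      simp only [EForm.atoms, Set.union_subset_iff] at hsub
      exact or_congr (ihφ H T hsub.1) (ihψ H T hsub.2)
  | imp φ ψ ihφ ihψ =>
      intro H T hsub
      simp only [EForm.atoms, Set.union_subset_iff] at hsub
      rw [sat_imp_iff, sat_imp_iff, tview_image_F]
      exact and_congr (imp_congr (ihφ H T hsub.1) (ihψ H T hsub.2)) Iff.rfl
  | K φ ih =>
      intro H T hsub
      rw [satK_unfold, satK_unfold]
      constructor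
      · rintro h j ⟨i, hi, rfl⟩
        exact (ih i.1 i.2 hsub).mp (h i hi)
      · intro h i hi
        exact (ih i.1 i.2 hsub).mpr (h _ ⟨i, hi, rfl⟩)

lemma epSat_congr_F {U : Set α} (W₁ : BView α) (φ : EForm α) (hsub : φ.atoms ⊆ U) :
    epSat W₁ φ ↔ epSat (Fmap U '' W₁) φ := by
  constructor
  · rintro h j ⟨i, hi, rfl⟩
    exact (sat_congr_F W₁ φ i.1 i.2 hsub).mp (h i hi)
  · intro h i hi
    exact (sat_congr_F W₁ φ i.1 i.2 hsub).mpr (h _ ⟨i, hi, rfl⟩)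

lemma conjForm_atoms : ∀ L : List (EForm α),
    (conjForm L).atoms ⊆ {a | ∃ φ ∈ L, a ∈ φ.atoms} := by
  intro L
  induction L with
  | nil =>
      intro a ha
      simp [conjForm, EForm.top, EForm.neg, EForm.atoms] at ha
  | cons φ L ih =>
      intro a ha
      rcases ha with ha | ha
      · exact ⟨φ, List.mem_cons_self, ha⟩
      · obtain ⟨ψ, hψ, hψa⟩ := ih ha
        exact ⟨ψ, List.mem_cons_of_mem _ hψ, hψa⟩

lemma disjForm_atoms : ∀ l : List α, (disjForm l).atoms ⊆ {a | a ∈ l} := by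
  intro l
  induction l with
  | nil => intro a ha; simp [disjForm, EForm.atoms] at ha
  | cons b l ih =>
      intro a ha
      rcases ha with ha | ha
      · simp only [EForm.atoms, Set.mem_singleton_iff] at ha
        exact ha ▸ List.mem_cons_self (a := b) (l := l)
      · exact List.mem_cons_of_mem _ (ih ha)

lemma form_atoms (r : ERule α) : r.form.atoms ⊆ r.atoms := by
  intro a ha
  rcases ha with ha | ha
  · obtain ⟨φ, hφ, hφa⟩ := conjForm_atoms r.body ha
    exact Or.inr ⟨φ, hφ, hφa⟩
  · exact Or.inl (disjForm_atoms r.head ha)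

section Transfer

variable {U : Set α} {W W' : BView α}

lemma sat_impTopBot_iff (V : BView α) (H T : Set α) :
    sat (.imp (EForm.top) .bot : EForm α) V H T ↔ False :=
  iff_of_false (fun h => h.1 (sat_top _ _ _)) (fun h => h)

lemma sat_impBotBot (V : BView α) (H T : Set α) :
    sat (.imp .bot .bot : EForm α) V H T := ⟨fun f => f, fun f => f⟩

lemma sat_negnegTop (V : BView α) (H T : Set α) :
    sat (.imp (.imp EForm.top .bot) .bot : EForm α) V H T :=
  ⟨fun h => h.1 (sat_top _ _ _), fun h => h.1 (sat_top _ _ _)⟩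

lemma sat_negnegBot_iff (V : BView α) (H T : Set α) :
    sat (.imp (.imp .bot .bot) .bot : EForm α) V H T ↔ False :=
  iff_of_false (fun h => h.1 ⟨fun f => f, fun f => f⟩) (fun h => h)

lemma sat_negK_iff {V : BView α} {l : EForm α} (htvV : tview V = W) (hWne : W.Nonempty)
    (hKV : ∀ H T, sat (.K l) V H T ↔ epSat W (.K l)) (H T : Set α) :
    sat (EForm.neg (.K l)) V H T ↔ ¬ epSat W (.K l) := by
  rw [EForm.neg, sat_imp_iff, htvV]
  constructor
  · intro h he
    exact h.1 ((hKV H T).mpr he)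
  · intro hne
    exact ⟨fun hs => absurd ((hKV H T).mp hs) hne,
           fun hs => absurd ((satK_iff_epSat hWne l T T).mp hs) hne⟩

lemma sat_negnegK_iff {V : BView α} {l : EForm α} (htvV : tview V = W)
    (htW : tview W = W) (hWne : W.Nonempty)
    (hKV : ∀ H T, sat (.K l) V H T ↔ epSat W (.K l)) (H T : Set α) :
    sat (EForm.neg (EForm.neg (.K l))) V H T ↔ epSat W (.K l) := by
  rw [EForm.neg, EForm.neg, sat_imp_iff, htvV]
  constructor
  · intro h
    by_contra hne
    exact h.2 ⟨fun hs => absurd ((satK_iff_epSat hWne l T T).mp hs) hne,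
               fun hs => absurd ((satK_iff_epSat hWne l T T).mp (htW ▸ hs)) hne⟩
  · intro he
    exact ⟨fun hn => hn.1 ((hKV H T).mpr he),
           fun hn => hn.1 ((satK_iff_epSat hWne l T T).mpr he)⟩

/-- Forward transfer of a literal to its reduct, for W' ⪯ W. -/
lemma lit_fwd (hWtot : totalView W) (hWne : W.Nonempty) (hle : viewLE W' W)
    (hW'wf : ∀ i ∈ W', i.1 ⊆ i.2)
    {φ : EForm α} (hφ : isObjLit φ ∨ isSubjLit φ) {H T : Set α} (hHT : H ⊆ T) :
    sat φ W' H T → sat (reduct W U φ) W' H T := by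
  have htv : tview W' = W := tview_eq_of_LE hWtot hle
  have htW : tview W = W := tview_total hWtot
  rcases hφ with hobj | hsub
  · rw [reduct_kfree _ _ _ (objLit_kfree hobj)]; exact id
  · rcases hsub with ⟨l, hl, rfl⟩ | ⟨l, hl, rfl⟩ | ⟨l, hl, rfl⟩
    · by_cases hu : l.atoms ⊆ U
      · intro h
        have h2 : sat (.K l) W T T := htv ▸ sat_persist (.K l) W' H T hW'wf hHT h
        have he : epSat W (.K l) := (satK_iff_epSat hWne l T T).mp h2
        simp only [reduct, hu, if_true, he]
        exact sat_top _ _ _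
      · simp only [reduct, hu, if_false, reduct_kfree _ _ _ (objLit_kfree hl)]
        exact id
    · by_cases hu : l.atoms ⊆ U
      · intro h
        rw [EForm.neg, sat_imp_iff, htv] at h
        have hne : ¬ epSat W (.K l) :=
          fun he => h.2 ((satK_iff_epSat hWne l T T).mpr he)
        simp only [EForm.neg, reduct, hu, if_true, hne, if_false]
        exact sat_impBotBot _ _ _
      · simp only [EForm.neg, reduct, hu, if_false,
          reduct_kfree _ _ _ (objLit_kfree hl)]
        exact id
    · by_cases hu : l.atoms ⊆ U
      · intro h
        rw [EForm.neg, EForm.neg, sat_imp_iff, htv] at h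
        have he : epSat W (.K l) := by
          by_contra hne
          exact h.2 ⟨fun hs => absurd ((satK_iff_epSat hWne l T T).mp hs) hne,
                     fun hs => absurd ((satK_iff_epSat hWne l T T).mp (htW ▸ hs)) hne⟩
        simp only [EForm.neg, reduct, hu, if_true, he]
        exact sat_negnegTop _ _ _
      · simp only [EForm.neg, reduct, hu, if_false,
          reduct_kfree _ _ _ (objLit_kfree hl)]
        exact id

/-- K-literal evaluation in a U-total view W' ⪯ W. -/
lemma satK_Utotal (hWtot : totalView W) (hWne : W.Nonempty) (hle : viewLE W' W)
    (hW'wf : ∀ i ∈ W', i.1 ⊆ i.2) (hUtot : ∀ i ∈ W', i.2 ∩ U ⊆ i.1)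
    {l : EForm α} (hl : isObjLit l) (hu : l.atoms ⊆ U) :
    ∀ (H T : Set α), sat (.K l) W' H T ↔ epSat W (.K l) := by
  intro H T
  rw [satK_unfold]
  have step : ∀ i ∈ W', (sat l W' i.1 i.2 ↔ sat l W i.2 i.2) := by
    intro i hi
    apply kfree_sat_congr l (objLit_kfree hl)
    · intro a ha
      have haU : a ∈ U := hu ha
      exact ⟨fun h => hW'wf i hi h, fun h => hUtot i hi ⟨h, haU⟩⟩
    · intro a _; exact Iff.rfl
  constructor
  · intro h
    apply epSat_K_of
    intro j hj
    obtain ⟨H₁, hm, _⟩ := hle.1 j hj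
    have h2 : sat l W j.2 j.2 := (step _ hm).mp (h _ hm)
    have hjt : j.1 = j.2 := hWtot j hj
    rw [hjt]
    exact h2
  · intro he i hi
    obtain ⟨H₂, hm, _⟩ := hle.2 i hi
    have h2 : sat l W H₂ i.2 := epSat_K_elim hWne he _ hm
    have hEq : H₂ = i.2 := hWtot _ hm
    rw [hEq] at h2
    exact (step i hi).mpr h2

/-- Literal/reduct equivalence in a U-total view W' ⪯ W. -/
lemma lit_iff_Utotal (hWtot : totalView W) (hWne : W.Nonempty) (hle : viewLE W' W)
    (hW'wf : ∀ i ∈ W', i.1 ⊆ i.2) (hUtot : ∀ i ∈ W', i.2 ∩ U ⊆ i.1)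
    {φ : EForm α} (hφ : isObjLit φ ∨ isSubjLit φ) (H T : Set α) :
    sat (reduct W U φ) W' H T ↔ sat φ W' H T := by
  have htv : tview W' = W := tview_eq_of_LE hWtot hle
  have htW : tview W = W := tview_total hWtot
  rcases hφ with hobj | hsub
  · rw [reduct_kfree _ _ _ (objLit_kfree hobj)]
  · rcases hsub with ⟨l, hl, rfl⟩ | ⟨l, hl, rfl⟩ | ⟨l, hl, rfl⟩
    · by_cases hu : l.atoms ⊆ U
      · have A := satK_Utotal hWtot hWne hle hW'wf hUtot hl hu
        by_cases he : epSat W (.K l)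
        · have hred : reduct W U (.K l) = EForm.top := by
            simp only [reduct, hu, if_true, he]
          rw [hred, A H T]
          exact iff_of_true (sat_top _ _ _) he
        · have hred : reduct W U (.K l) = .bot := by
            simp only [reduct, hu, if_true, he, if_false]
          rw [hred, A H T, sat_bot_iff]
          exact iff_of_false (fun h => h) he
      · simp only [reduct, hu, if_false, reduct_kfree _ _ _ (objLit_kfree hl)]
    · by_cases hu : l.atoms ⊆ U
      · have A := satK_Utotal hWtot hWne hle hW'wf hUtot hl hu
        rw [sat_negK_iff htv hWne A H T]
        by_cases he : epSat W (.K l)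
        · have hred : reduct W U (EForm.neg (.K l)) = .imp EForm.top .bot := by
            simp only [EForm.neg, reduct, hu, if_true, he]
          rw [hred, sat_impTopBot_iff]
          exact iff_of_false (fun h => h) (fun h => h he)
        · have hred : reduct W U (EForm.neg (.K l)) = .imp .bot .bot := by
            simp only [EForm.neg, reduct, hu, if_true, he, if_false]
          rw [hred]
          exact iff_of_true (sat_impBotBot _ _ _) he
      · simp only [EForm.neg, reduct, hu, if_false,
          reduct_kfree _ _ _ (objLit_kfree hl)]
    · by_cases hu : l.atoms ⊆ U
      · have A := satK_Utotal hWtot hWne hle hW'wf hUtot hl hu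
        rw [sat_negnegK_iff htv htW hWne A H T]
        by_cases he : epSat W (.K l)
        · have hred : reduct W U (EForm.neg (EForm.neg (.K l))) =
              .imp (.imp EForm.top .bot) .bot := by
            simp only [EForm.neg, reduct, hu, if_true, he]
          rw [hred]
          exact iff_of_true (sat_negnegTop _ _ _) he
        · have hred : reduct W U (EForm.neg (EForm.neg (.K l))) =
              .imp (.imp .bot .bot) .bot := by
            simp only [EForm.neg, reduct, hu, if_true, he, if_false]
          rw [hred, sat_negnegBot_iff]
          exact iff_of_false (fun h => h) he
      · simp only [EForm.neg, reduct, hu, if_false,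
          reduct_kfree _ _ _ (objLit_kfree hl)]

/-- K-literal evaluation in the view Fmap U '' W', for non-U objective literals. -/
lemma satK_F (hWtot : totalView W) (hWne : W.Nonempty) (hle : viewLE W' W)
    {l : EForm α} (hl : isObjLit l) (hnotU : ∀ a ∈ l.atoms, a ∉ U) :
    ∀ (H T : Set α), sat (.K l) (Fmap U '' W') H T ↔ epSat W (.K l) := by
  intro H T
  rw [satK_unfold]
  have agr : ∀ (i : Set α × Set α), ∀ a ∈ l.atoms,
      (a ∈ (i.1 ∩ U) ∪ (i.2 \ U) ↔ a ∈ i.2) := by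
    intro i a ha
    constructor
    · rintro (⟨_, haU⟩ | ⟨h, _⟩)
      · exact absurd haU (hnotU a ha)
      · exact h
    · intro h; exact Or.inr ⟨h, hnotU a ha⟩
  constructor
  · intro h
    apply epSat_K_of
    intro j hj
    obtain ⟨H₁, hm, _⟩ := hle.1 j hj
    have h2 := h _ ⟨(H₁, j.2), hm, rfl⟩
    have h3 : sat l W j.2 j.2 :=
      (kfree_sat_congr l (objLit_kfree hl) _ _ _ _ _ _
        (agr (H₁, j.2)) (fun a _ => Iff.rfl)).mp h2
    have hjt : j.1 = j.2 := hWtot j hj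
    rw [hjt]
    exact h3
  · rintro he j ⟨i, hi, rfl⟩
    have hmW : (i.2, i.2) ∈ W := total_mem_of hWtot hle hi
    have h2 : sat l W i.2 i.2 := epSat_K_elim hWne he _ hmW
    exact (kfree_sat_congr l (objLit_kfree hl) _ _ _ _ _ _
      (agr i) (fun a _ => Iff.rfl)).mpr h2

/-- Evaluation of reducts of non-U literals in Fmap U '' W' matches evaluation in W. -/
lemma lit_F (hWtot : totalView W) (hWne : W.Nonempty) (hle : viewLE W' W)
    {φ : EForm α} (hφ : isObjLit φ ∨ isSubjLit φ)
    (hobjU : isObjLit φ → ∀ a ∈ φ.atoms, a ∉ U)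
    {i : Set α × Set α} (hi : i ∈ W') :
    sat (reduct W U φ) (Fmap U '' W') ((i.1 ∩ U) ∪ (i.2 \ U)) i.2 ↔
      sat (reduct W U φ) W i.2 i.2 := by
  have htv : tview W' = W := tview_eq_of_LE hWtot hle
  have htW : tview W = W := tview_total hWtot
  have htv3 : tview (Fmap U '' W') = W := by rw [tview_image_F]; exact htv
  have hKW : ∀ (l : EForm α) (H T : Set α), sat (.K l) W H T ↔ epSat W (.K l) :=
    fun l => satK_iff_epSat hWne l
  rcases hφ with hobj | hsub
  · rw [reduct_kfree _ _ _ (objLit_kfree hobj)]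
    apply kfree_sat_congr φ (objLit_kfree hobj)
    · intro a ha
      have hna : a ∉ U := hobjU hobj a ha
      constructor
      · rintro (⟨_, haU⟩ | ⟨h, _⟩)
        · exact absurd haU hna
        · exact h
      · intro h; exact Or.inr ⟨h, hna⟩
    · intro a _; exact Iff.rfl
  · rcases hsub with ⟨l, hl, rfl⟩ | ⟨l, hl, rfl⟩ | ⟨l, hl, rfl⟩
    · by_cases hu : l.atoms ⊆ U
      · by_cases he : epSat W (.K l)
        · have hred : reduct W U (.K l) = EForm.top := by
            simp only [reduct, hu, if_true, he]
          rw [hred]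
          exact iff_of_true (sat_top _ _ _) (sat_top _ _ _)
        · have hred : reduct W U (.K l) = .bot := by
            simp only [reduct, hu, if_true, he, if_false]
          rw [hred]
          exact Iff.rfl
      · have hnl : ∀ a ∈ l.atoms, a ∉ U := objLit_notU hl hu
        have hred : reduct W U (.K l) = .K l := by
          simp only [reduct, hu, if_false, reduct_kfree _ _ _ (objLit_kfree hl)]
        rw [hred, satK_F hWtot hWne hle hl hnl, hKW l]
    · by_cases hu : l.atoms ⊆ U
      · by_cases he : epSat W (.K l)
        · have hred : reduct W U (EForm.neg (.K l)) = .imp EForm.top .bot := by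
            simp only [EForm.neg, reduct, hu, if_true, he]
          rw [hred, sat_impTopBot_iff, sat_impTopBot_iff]
        · have hred : reduct W U (EForm.neg (.K l)) = .imp .bot .bot := by
            simp only [EForm.neg, reduct, hu, if_true, he, if_false]
          rw [hred]
          exact iff_of_true (sat_impBotBot _ _ _) (sat_impBotBot _ _ _)
      · have hnl : ∀ a ∈ l.atoms, a ∉ U := objLit_notU hl hu
        have hred : reduct W U (EForm.neg (.K l)) = EForm.neg (.K l) := by
          simp only [EForm.neg, reduct, hu, if_false,
            reduct_kfree _ _ _ (objLit_kfree hl)]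
        rw [hred,
          sat_negK_iff htv3 hWne (satK_F hWtot hWne hle hl hnl),
          sat_negK_iff htW hWne (hKW l)]
    · by_cases hu : l.atoms ⊆ U
      · by_cases he : epSat W (.K l)
        · have hred : reduct W U (EForm.neg (EForm.neg (.K l))) =
              .imp (.imp EForm.top .bot) .bot := by
            simp only [EForm.neg, reduct, hu, if_true, he]
          rw [hred]
          exact iff_of_true (sat_negnegTop _ _ _) (sat_negnegTop _ _ _)
        · have hred : reduct W U (EForm.neg (EForm.neg (.K l))) =
              .imp (.imp .bot .bot) .bot := by
            simp only [EForm.neg, reduct, hu, if_true, he, if_false]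
          rw [hred, sat_negnegBot_iff, sat_negnegBot_iff]
      · have hnl : ∀ a ∈ l.atoms, a ∉ U := objLit_notU hl hu
        have hred : reduct W U (EForm.neg (EForm.neg (.K l))) =
            EForm.neg (EForm.neg (.K l)) := by
          simp only [EForm.neg, reduct, hu, if_false,
            reduct_kfree _ _ _ (objLit_kfree hl)]
        rw [hred,
          sat_negnegK_iff htv3 htW hWne (satK_F hWtot hWne hle hl hnl),
          sat_negnegK_iff htW htW hWne (hKW l)]

end Transfer

section Rules

variable {U : Set α} {W W' : BView α}

lemma ruleD1 (hWtot : totalView W) (hWne : W.Nonempty) (hle : viewLE W' W)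
    (hW'wf : ∀ i ∈ W', i.1 ⊆ i.2) (r : ERule α) (hr : r.wf)
    (h : epSat W' ((ruleReduct W U r).form)) : epSat W' r.form := by
  have htv : tview W' = W := tview_eq_of_LE hWtot hle
  have htW : tview W = W := tview_total hWtot
  intro i hi
  rw [sat_ruleForm]
  have hh := h i hi
  rw [sat_ruleForm] at hh
  constructor
  · intro hb
    apply hh.1
    intro ψ hψ
    obtain ⟨φ, hφ, rfl⟩ := List.mem_map.mp hψ
    exact lit_fwd hWtot hWne hle hW'wf (hr φ hφ) (hW'wf i hi) (hb φ hφ)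
  · intro hb
    apply hh.2
    intro ψ hψ
    obtain ⟨φ, hφ, rfl⟩ := List.mem_map.mp hψ
    rw [htv]
    rw [htv] at hb
    exact (reduct_sat_self W htW U φ i.2 i.2).mpr (hb φ hφ)

lemma ruleD2 (hWtot : totalView W) (hWne : W.Nonempty) (hle : viewLE W' W)
    (hW'wf : ∀ i ∈ W', i.1 ⊆ i.2) (hUtot : ∀ i ∈ W', i.2 ∩ U ⊆ i.1)
    (r : ERule α) (hr : r.wf)
    (h : epSat W' r.form) : epSat W' ((ruleReduct W U r).form) := by
  have htv : tview W' = W := tview_eq_of_LE hWtot hle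
  have htW : tview W = W := tview_total hWtot
  intro i hi
  rw [sat_ruleForm]
  have hh := h i hi
  rw [sat_ruleForm] at hh
  constructor
  · intro hb
    apply hh.1
    intro φ hφ
    exact (lit_iff_Utotal hWtot hWne hle hW'wf hUtot (hr φ hφ) i.1 i.2).mp
      (hb _ (List.mem_map.mpr ⟨φ, hφ, rfl⟩))
  · intro hb
    apply hh.2
    intro φ hφ
    have h2 := hb _ (List.mem_map.mpr ⟨φ, hφ, rfl⟩)
    rw [htv] at h2 ⊢
    exact (reduct_sat_self W htW U φ i.2 i.2).mp h2

lemma ruleE (hWtot : totalView W) (hWne : W.Nonempty) (hle : viewLE W' W)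
    (r : ERule α) (hr : r.wf) (hsplit : (r.objBodyAtoms ∪ r.headAtoms) ∩ U = ∅)
    (hWQ : epSat W ((ruleReduct W U r).form)) :
    epSat (Fmap U '' W') ((ruleReduct W U r).form) := by
  have htv : tview W' = W := tview_eq_of_LE hWtot hle
  have htW : tview W = W := tview_total hWtot
  have htv3 : tview (Fmap U '' W') = W := by rw [tview_image_F]; exact htv
  have hheadU : ∀ a ∈ r.head, a ∉ U := by
    intro a ha haU
    have : a ∈ (r.objBodyAtoms ∪ r.headAtoms) ∩ U := ⟨Or.inr ha, haU⟩
    rw [hsplit] at this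
    exact this
  have hlit : ∀ φ ∈ r.body, ∀ i ∈ W',
      (sat (reduct W U φ) (Fmap U '' W') ((i.1 ∩ U) ∪ (i.2 \ U)) i.2 ↔
        sat (reduct W U φ) W i.2 i.2) := by
    intro φ hφ i hi
    refine lit_F hWtot hWne hle (hr φ hφ) ?_ hi
    intro hobj a ha haU
    have : a ∈ (r.objBodyAtoms ∪ r.headAtoms) ∩ U := ⟨Or.inl ⟨φ, hφ, hobj, ha⟩, haU⟩
    rw [hsplit] at this
    exact this
  rintro j ⟨i, hi, rfl⟩
  rw [sat_ruleForm]
  have hmW : (i.2, i.2) ∈ W := total_mem_of hWtot hle hi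
  have hWr := hWQ _ hmW
  rw [sat_ruleForm] at hWr
  constructor
  · intro hb
    have hb' : ∀ ψ ∈ (ruleReduct W U r).body, sat ψ W i.2 i.2 := by
      intro ψ hψ
      obtain ⟨φ, hφ, rfl⟩ := List.mem_map.mp hψ
      exact (hlit φ hφ i hi).mp (hb _ hψ)
    obtain ⟨a, hah, haT⟩ := hWr.1 hb'
    exact ⟨a, hah, Or.inr ⟨haT, hheadU a hah⟩⟩
  · intro hb
    rw [htv3] at hb
    apply hWr.1
    intro ψ hψ
    obtain ⟨φ, hφ, rfl⟩ := List.mem_map.mp hψ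
    exact hb _ hψ

lemma isBView_F (hne : W'.Nonempty) (hW'wf : ∀ i ∈ W', i.1 ⊆ i.2) :
    isBView (Fmap U '' W') := by
  constructor
  · exact hne.image _
  · rintro j ⟨i, hi, rfl⟩
    exact Set.union_subset (Set.inter_subset_left.trans (hW'wf i hi)) Set.diff_subset

lemma viewLE_F (hWtot : totalView W) (hle : viewLE W' W)
    (hW'wf : ∀ i ∈ W', i.1 ⊆ i.2) : viewLE (Fmap U '' W') W := by
  constructor
  · intro j hj
    obtain ⟨H₁, hm, hsub⟩ := hle.1 j hj
    refine ⟨(H₁ ∩ U) ∪ (j.2 \ U), ⟨(H₁, j.2), hm, rfl⟩, ?_⟩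
    have hj12 : j.1 = j.2 := hWtot j hj
    rw [hj12]
    exact Set.union_subset (Set.inter_subset_left.trans (hj12 ▸ hsub)) Set.diff_subset
  · rintro j ⟨i, hi, rfl⟩
    obtain ⟨H₂, hm, _⟩ := hle.2 i hi
    have h2 : H₂ = i.2 := hWtot _ hm
    rw [h2] at hm
    refine ⟨i.2, hm, ?_⟩
    exact Set.union_subset (Set.inter_subset_left.trans (hW'wf i hi)) Set.diff_subset

end Rules

end Aux

end Epist

namespace Epist
/-- W is a FEEL-world view of Π iff W is a FEEL-world view of
B_U(Π) ∪ E_U(Π,W). -/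
theorem stmt7 {α : Type} (P : EProgram α) (hwf : progWF P) (U : Set α)
    (hU : splittingSet P U) (B Tp : EProgram α) (hBT : isSplitting P U B Tp)
    (W : BView α) (hW : totalView W) :
    FEEL (progTheory P) W ↔ FEEL (progTheory (B ∪ EU Tp W U)) W := by
  obtain ⟨hdisj, hunion, hB, hTp⟩ := hBT
  have hPT : progTheory P = progTheory B ∪ progTheory Tp := by
    rw [← hunion]; exact Set.image_union _ _ _
  have hQT : progTheory (B ∪ EU Tp W U) =
      progTheory B ∪ progTheory (EU Tp W U) := Set.image_union _ _ _
  have htW : tview W = W := tview_total hW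
  have hwfTp : ∀ r ∈ Tp, ERule.wf r := by
    intro r hr; exact hwf r (by rw [← hunion]; exact Or.inr hr)
  have hwfB : ∀ r ∈ B, ERule.wf r := by
    intro r hr; exact hwf r (by rw [← hunion]; exact Or.inl hr)
  constructor
  · rintro ⟨_, hmod, hmin⟩
    have hWne : W.Nonempty := hmod.1.1
    refine ⟨hW, ⟨hmod.1, ?_⟩, ?_⟩
    · -- W is an epistemic model of B ∪ E
      intro ψ hψ
      rw [hQT] at hψ
      rcases hψ with ⟨r, hr, rfl⟩ | ⟨ρ, hρ, rfl⟩
      · exact hmod.2 _ (by rw [hPT]; exact Or.inl ⟨r, hr, rfl⟩)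
      · obtain ⟨r, hr, rfl⟩ := hρ
        have hforms : epSat W r.form :=
          hmod.2 _ (by rw [hPT]; exact Or.inr ⟨r, hr, rfl⟩)
        intro i hi
        rw [ruleReduct_form, reduct_sat_self W htW U r.form]
        exact hforms i hi
    · -- minimality
      rintro W'' ⟨hbv, hsat⟩ hlt
      refine hmin W'' ⟨hbv, ?_⟩ hlt
      intro ψ hψ
      rw [hPT] at hψ
      rcases hψ with ⟨r, hr, rfl⟩ | ⟨r, hr, rfl⟩
      · exact hsat _ (by rw [hQT]; exact Or.inl ⟨r, hr, rfl⟩)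
      · exact ruleD1 hW hWne hlt.1 hbv.2 r (hwfTp r hr)
          (hsat _ (by rw [hQT]; exact Or.inr ⟨ruleReduct W U r, ⟨r, hr, rfl⟩, rfl⟩))
  · rintro ⟨_, hmodQ, hminQ⟩
    have hWne : W.Nonempty := hmodQ.1.1
    have hmodP : epModel W (progTheory P) := by
      refine ⟨hmodQ.1, ?_⟩
      intro ψ hψ
      rw [hPT] at hψ
      rcases hψ with ⟨r, hr, rfl⟩ | ⟨r, hr, rfl⟩
      · exact hmodQ.2 _ (by rw [hQT]; exact Or.inl ⟨r, hr, rfl⟩)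
      · have h1 : epSat W ((ruleReduct W U r).form) :=
          hmodQ.2 _ (by rw [hQT]; exact Or.inr ⟨ruleReduct W U r, ⟨r, hr, rfl⟩, rfl⟩)
        intro i hi
        have h2 := h1 i hi
        rwa [ruleReduct_form, reduct_sat_self W htW U r.form] at h2
    refine ⟨hW, hmodP, ?_⟩
    rintro W' hmod' hlt'
    have hbv' := hmod'.1
    have hW'wf := hbv'.2
    have hW'ne := hbv'.1
    have hle := hlt'.1
    -- the view W₃ = Fmap U '' W' is an epistemic model of B ∪ E below W
    have hW3model : epModel (Fmap U '' W') (progTheory (B ∪ EU Tp W U)) := by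
      refine ⟨isBView_F hW'ne hW'wf, ?_⟩
      intro ψ hψ
      rw [hQT] at hψ
      rcases hψ with ⟨r, hr, rfl⟩ | ⟨ρ, hρ, rfl⟩
      · have h1 : epSat W' r.form := hmod'.2 _ (by rw [hPT]; exact Or.inl ⟨r, hr, rfl⟩)
        exact (epSat_congr_F W' r.form ((form_atoms r).trans (hB r hr))).mp h1
      · obtain ⟨r, hr, rfl⟩ := hρ
        exact ruleE hW hWne hle r (hwfTp r hr) (hTp r hr)
          (hmodQ.2 _ (by rw [hQT]; exact Or.inr ⟨ruleReduct W U r, ⟨r, hr, rfl⟩, rfl⟩))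
    have hW3le : viewLE (Fmap U '' W') W := viewLE_F hW hle hW'wf
    have hW3eq : Fmap U '' W' = W := by
      by_contra hne
      exact hminQ _ hW3model ⟨hW3le, hne⟩
    -- hence W' is total on U
    have hUtot : ∀ i ∈ W', i.2 ∩ U ⊆ i.1 := by
      intro i hi a haa
      have hmem3 : Fmap U i ∈ W := by rw [← hW3eq]; exact ⟨i, hi, rfl⟩
      have heq : (Fmap U i).1 = (Fmap U i).2 := hW _ hmem3
      have ha : a ∈ (Fmap U i).1 := by rw [heq]; exact haa.1
      rcases ha with ⟨h, _⟩ | ⟨_, hnU⟩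
      · exact h
      · exact absurd haa.2 hnU
    -- so W' itself is a model of B ∪ E, contradicting minimality
    have hmodQ' : epModel W' (progTheory (B ∪ EU Tp W U)) := by
      refine ⟨hbv', ?_⟩
      intro ψ hψ
      rw [hQT] at hψ
      rcases hψ with ⟨r, hr, rfl⟩ | ⟨ρ, hρ, rfl⟩
      · exact hmod'.2 _ (by rw [hPT]; exact Or.inl ⟨r, hr, rfl⟩)
      · obtain ⟨r, hr, rfl⟩ := hρ
        exact ruleD2 hW hWne hle hW'wf hUtot r (hwfTp r hr)
          (hmod'.2 _ (by rw [hPT]; exact Or.inr ⟨r, hr, rfl⟩))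
    exact hminQ W' hmodQ' hlt' 
end Epist
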